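/- Let \ell and b be nonzero integers and define the sequence s by s_0 = 0, s_1 = 1, and s_j = \ell s_{j-1} + b s_{j-2} for j \ge 2. Set r = \gcd(\ell, b), t = \gcd(\ell^2/r, b/r), and \sigma = r/t. Then for every n \ge 1, the integer s_n is divisible by t^{n-1} \sigma^{\lfloor n/2 \rfloor}. -/

import Mathlib

/-- For nonzero integers `ℓ, b` and `s` defined by `s₀ = 0`, `s₁ = 1`,
`sⱼ = ℓ s_{j-1} + b s_{j-2}`, with `r = gcd(ℓ, b)`, `t = gcd(ℓ²/r, b/r)`, `σ = r/t`:
for every `n ≥ 1`, `t^(n-1) σ^⌊n/2⌋` divides `sₙ`. -/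
theorem stmt9 (ℓ b : ℤ) (hℓ : ℓ ≠ 0) (hb : b ≠ 0) (s : ℕ → ℤ)
    (hs0 : s 0 = 0) (hs1 : s 1 = 1)
    (hrec : ∀ j, 2 ≤ j → s j = ℓ * s (j - 1) + b * s (j - 2))
    (r t σ : ℤ) (hr : r = Int.gcd ℓ b) (ht : t = Int.gcd (ℓ ^ 2 / r) (b / r))
    (hσ : σ = r / t) :
    ∀ n, 1 ≤ n → t ^ (n - 1) * σ ^ (n / 2) ∣ s n := by
  have hg0 : Int.gcd ℓ b ≠ 0 := by
    intro h
    exact hℓ (Int.gcd_eq_zero_iff.mp h).1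
  have hr0 : r ≠ 0 := by
    rw [hr]; exact_mod_cast hg0
  have hrl : r ∣ ℓ := hr ▸ Int.gcd_dvd_left ℓ b
  have hrb : r ∣ b := hr ▸ Int.gcd_dvd_right ℓ b
  obtain ⟨l', hl'⟩ := hrl
  obtain ⟨b', hb'⟩ := hrb
  have hldiv : ℓ / r = l' := by rw [hl', Int.mul_ediv_cancel_left _ hr0]
  have hbdiv : b / r = b' := by rw [hb', Int.mul_ediv_cancel_left _ hr0]
  have hl2div : ℓ ^ 2 / r = r * l' ^ 2 := by
    rw [hl']
    rw [show (r * l') ^ 2 = r * (r * l' ^ 2) by ring, Int.mul_ediv_cancel_left _ hr0]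
  have hcop : IsCoprime l' b' := by
    rw [Int.isCoprime_iff_gcd_eq_one, ← hldiv, ← hbdiv, hr]
    exact Int.gcd_div_gcd_div_gcd (Nat.pos_of_ne_zero hg0)
  have htdvd1 : t ∣ r * l' ^ 2 := by rw [ht, ← hl2div]; exact Int.gcd_dvd_left _ _
  have htdvd2 : t ∣ b' := by rw [ht, hbdiv]; exact Int.gcd_dvd_right _ _
  have htcop : IsCoprime t (l' ^ 2) := (hcop.pow_left).symm.of_isCoprime_of_dvd_left htdvd2
  have htr : t ∣ r := htcop.dvd_of_dvd_mul_right htdvd1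
  have ht0 : t ≠ 0 := by
    intro h
    have hg : Int.gcd (ℓ ^ 2 / r) (b / r) = 0 := by
      have := ht ▸ h
      exact_mod_cast this
    have h2 := (Int.gcd_eq_zero_iff.mp hg).2
    rw [hbdiv] at h2
    exact hb (by rw [hb', h2, mul_zero])
  have hrts : r = t * σ := by rw [hσ, Int.mul_ediv_cancel' htr]
  -- key divisibilities
  have key1 : t * σ ∣ ℓ := by rw [hl', hrts]; exact ⟨l', by ring⟩
  have key2 : t ^ 2 * σ ∣ b := by
    obtain ⟨c, hc⟩ := htdvd2
    exact ⟨c, by rw [hb', hc, hrts]; ring⟩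
  intro n
  induction n using Nat.strong_induction_on with
  | _ n ih =>
    intro hn
    match n, hn with
    | 1, _ => simp [hs1]
    | 2, _ =>
      have h2 : s 2 = ℓ * s 1 + b * s 0 := hrec 2 (by norm_num)
      rw [h2, hs0, hs1]
      simpa using key1
    | (m + 3), _ =>
      have ih1 := ih (m + 2) (by omega) (by omega)
      have ih2 := ih (m + 1) (by omega) (by omega)
      have hrw : s (m + 3) = ℓ * s (m + 2) + b * s (m + 1) := hrec (m + 3) (by omega)
      rw [hrw]
      have e1 : (m + 3) / 2 ≤ (m + 2) / 2 + 1 := by omega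
      have e2 : (m + 3) / 2 = (m + 1) / 2 + 1 := by omega
      apply dvd_add
      · calc t ^ (m + 3 - 1) * σ ^ ((m + 3) / 2)
            ∣ t ^ (m + 2) * σ ^ ((m + 2) / 2 + 1) :=
              mul_dvd_mul_left _ (pow_dvd_pow _ e1)
          _ = (t * σ) * (t ^ (m + 2 - 1) * σ ^ ((m + 2) / 2)) := by
              rw [show m + 2 - 1 = m + 1 from rfl]; ring
          _ ∣ ℓ * s (m + 2) := mul_dvd_mul key1 ih1
      · calc t ^ (m + 3 - 1) * σ ^ ((m + 3) / 2)
            = (t ^ 2 * σ) * (t ^ (m + 1 - 1) * σ ^ ((m + 1) / 2)) := by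
              rw [e2, show m + 1 - 1 = m from rfl, show m + 3 - 1 = m + 2 from rfl]; ring
          _ ∣ b * s (m + 1) := mul_dvd_mul key2 ih2
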